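/- Let P and Q be two simple sequences of n distinct points in ℝ², and suppose there is a continuous path in (ℝ²)ⁿ from P to Q such that every point sequence along the path is simple (consists of distinct points and has a super-order type containing no zeros). Then P and Q have the same super-order type. -/

import Mathlib

/-- Cross product of two planar vectors. -/
def cross (u v : ℝ × ℝ) : ℝ := u.1 * v.2 - u.2 * v.1

/-- The line through `p` and `q`, as a set of points. -/
def lineThrough (p q : ℝ × ℝ) : Set (ℝ × ℝ) := {x | ∃ t : ℝ, x = p + t • (q - p)}

/-- A sextuple of points is degenerate if one of the three lines `A = a₁a₂`,
`B = b₁b₂`, `C = c₁c₂` is vertical, or `A` is parallel to `B` or to `C`,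
or `A`, `B`, `C` pass through a common point. -/
def IsDegenerate (a₁ a₂ b₁ b₂ c₁ c₂ : ℝ × ℝ) : Prop :=
  a₁.1 = a₂.1 ∨ b₁.1 = b₂.1 ∨ c₁.1 = c₂.1 ∨
  cross (a₂ - a₁) (b₂ - b₁) = 0 ∨ cross (a₂ - a₁) (c₂ - c₁) = 0 ∨
  ∃ p : ℝ × ℝ, p ∈ lineThrough a₁ a₂ ∧ p ∈ lineThrough b₁ b₂ ∧ p ∈ lineThrough c₁ c₂

/-- The parameter `t` such that `a₁ + t • (a₂ - a₁)` is the intersection of the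
line through `a₁, a₂` with the line through `b₁, b₂` (when the lines are not
parallel). -/
noncomputable def interParam (a₁ a₂ b₁ b₂ : ℝ × ℝ) : ℝ :=
  cross (b₁ - a₁) (b₂ - b₁) / cross (a₂ - a₁) (b₂ - b₁)

/-- The type `σ(T)` of a sextuple of points: `0` if degenerate, `-1` if `A ∩ B`
comes before `A ∩ C` along the direction of `A`, and `+1` otherwise. -/
noncomputable def sextType (a₁ a₂ b₁ b₂ c₁ c₂ : ℝ × ℝ) : ℤ :=
  open Classical in
  if IsDegenerate a₁ a₂ b₁ b₂ c₁ c₂ then 0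
  else if interParam a₁ a₂ b₁ b₂ < interParam a₁ a₂ c₁ c₂ then -1 else 1

/-- A sextuple of indices is admissible: the three pairs consist of distinct
indices, are pairwise distinct as unordered pairs, and have empty common
intersection. -/
def AdmissibleIdx {n : ℕ} (i₁ i₂ j₁ j₂ k₁ k₂ : Fin n) : Prop :=
  i₁ ≠ i₂ ∧ j₁ ≠ j₂ ∧ k₁ ≠ k₂ ∧
  ({i₁, i₂} : Finset (Fin n)) ≠ {j₁, j₂} ∧
  ({j₁, j₂} : Finset (Fin n)) ≠ {k₁, k₂} ∧
  ({k₁, k₂} : Finset (Fin n)) ≠ {i₁, i₂} ∧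
  ({i₁, i₂} ∩ {j₁, j₂} ∩ {k₁, k₂} : Finset (Fin n)) = ∅

/-- The super-order type of a point sequence `P`: the family of types of all
sextuples of points indexed by admissible index sextuples (non-admissible
index sextuples are mapped to `0`). -/
noncomputable def superOrderType {n : ℕ} (P : Fin n → ℝ × ℝ) :
    Fin n × Fin n × Fin n × Fin n × Fin n × Fin n → ℤ :=
  open Classical in
  fun t =>
    if AdmissibleIdx t.1 t.2.1 t.2.2.1 t.2.2.2.1 t.2.2.2.2.1 t.2.2.2.2.2 then
      sextType (P t.1) (P t.2.1) (P t.2.2.1) (P t.2.2.2.1) (P t.2.2.2.2.1) (P t.2.2.2.2.2)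
    else 0

/-- A sequence of distinct points is simple if its super-order type contains
no zeros. -/
def IsSimpleSeq {n : ℕ} (P : Fin n → ℝ × ℝ) : Prop :=
  Function.Injective P ∧
  ∀ i₁ i₂ j₁ j₂ k₁ k₂ : Fin n, AdmissibleIdx i₁ i₂ j₁ j₂ k₁ k₂ →
    sextType (P i₁) (P i₂) (P j₁) (P j₂) (P k₁) (P k₂) ≠ 0

/-! ### Auxiliary material -/

/-- Signed polynomial whose sign determines the sext type on nondegenerate tuples. -/
def PhiOf (a₁ a₂ b₁ b₂ c₁ c₂ : ℝ × ℝ) : ℝ :=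
  (cross (c₁ - a₁) (c₂ - c₁) * cross (a₂ - a₁) (b₂ - b₁)
    - cross (b₁ - a₁) (b₂ - b₁) * cross (a₂ - a₁) (c₂ - c₁))
  * (cross (a₂ - a₁) (b₂ - b₁) * cross (a₂ - a₁) (c₂ - c₁))

lemma div_pos_iff_mul_pos {x y : ℝ} (hy : y ≠ 0) : 0 < x / y ↔ 0 < x * y := by
  have h2 : x * y = (x / y) * y ^ 2 := by field_simp
  have hy2 : (0:ℝ) < y ^ 2 := by positivity
  rw [h2]
  constructor
  · intro h; positivity
  · intro h; nlinarith

lemma interParam_lt_iff (a₁ a₂ b₁ b₂ c₁ c₂ : ℝ × ℝ)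
    (hB : cross (a₂ - a₁) (b₂ - b₁) ≠ 0) (hC : cross (a₂ - a₁) (c₂ - c₁) ≠ 0) :
    (interParam a₁ a₂ b₁ b₂ < interParam a₁ a₂ c₁ c₂ ↔ 0 < PhiOf a₁ a₂ b₁ b₂ c₁ c₂) := by
  rw [← sub_pos]
  have key : interParam a₁ a₂ c₁ c₂ - interParam a₁ a₂ b₁ b₂ =
      (cross (c₁ - a₁) (c₂ - c₁) * cross (a₂ - a₁) (b₂ - b₁)
        - cross (b₁ - a₁) (b₂ - b₁) * cross (a₂ - a₁) (c₂ - c₁))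
      / (cross (a₂ - a₁) (b₂ - b₁) * cross (a₂ - a₁) (c₂ - c₁)) := by
    unfold interParam; field_simp
  rw [key, div_pos_iff_mul_pos (mul_ne_zero hB hC)]
  rfl

lemma mem_line_of_interParam (a₁ a₂ b₁ b₂ : ℝ × ℝ)
    (hB : cross (a₂ - a₁) (b₂ - b₁) ≠ 0) :
    a₁ + interParam a₁ a₂ b₁ b₂ • (a₂ - a₁) ∈ lineThrough b₁ b₂ := by
  refine ⟨cross (b₁ - a₁) (a₂ - a₁) / cross (a₂ - a₁) (b₂ - b₁), ?_⟩
  simp only [interParam, Prod.ext_iff, Prod.fst_add, Prod.snd_add, Prod.smul_fst,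
    Prod.smul_snd, Prod.fst_sub, Prod.snd_sub, smul_eq_mul]
  constructor <;> (field_simp; unfold cross; simp only [Prod.fst_sub, Prod.snd_sub]; ring)

lemma phi_ne_zero_of_nondeg {a₁ a₂ b₁ b₂ c₁ c₂ : ℝ × ℝ}
    (h : ¬ IsDegenerate a₁ a₂ b₁ b₂ c₁ c₂) : PhiOf a₁ a₂ b₁ b₂ c₁ c₂ ≠ 0 := by
  unfold IsDegenerate at h
  push_neg at h
  obtain ⟨-, -, -, hB, hC, hcom⟩ := h
  intro hphi
  unfold PhiOf at hphi
  rcases mul_eq_zero.1 hphi with hG | hD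
  · -- G = 0, so the two intersection parameters coincide: common point exists
    have heq : interParam a₁ a₂ b₁ b₂ = interParam a₁ a₂ c₁ c₂ := by
      unfold interParam
      rw [div_eq_div_iff hB hC]
      linarith [sub_eq_zero.1 hG]
    refine hcom (a₁ + interParam a₁ a₂ b₁ b₂ • (a₂ - a₁)) ⟨interParam a₁ a₂ b₁ b₂, rfl⟩
      (mem_line_of_interParam a₁ a₂ b₁ b₂ hB) ?_
    rw [heq]
    exact mem_line_of_interParam a₁ a₂ c₁ c₂ hC
  · exact (mul_ne_zero hB hC) hD

lemma sextType_eq_of_nondeg {a₁ a₂ b₁ b₂ c₁ c₂ : ℝ × ℝ}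
    (h : ¬ IsDegenerate a₁ a₂ b₁ b₂ c₁ c₂) :
    sextType a₁ a₂ b₁ b₂ c₁ c₂ = if 0 < PhiOf a₁ a₂ b₁ b₂ c₁ c₂ then -1 else 1 := by
  have hB : cross (a₂ - a₁) (b₂ - b₁) ≠ 0 := by
    intro h'; exact h (Or.inr (Or.inr (Or.inr (Or.inl h'))))
  have hC : cross (a₂ - a₁) (c₂ - c₁) ≠ 0 := by
    intro h'; exact h (Or.inr (Or.inr (Or.inr (Or.inr (Or.inl h')))))
  rw [sextType, if_neg h]
  by_cases hlt : interParam a₁ a₂ b₁ b₂ < interParam a₁ a₂ c₁ c₂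
  · rw [if_pos hlt, if_pos ((interParam_lt_iff a₁ a₂ b₁ b₂ c₁ c₂ hB hC).1 hlt)]
  · rw [if_neg hlt, if_neg (fun hp => hlt ((interParam_lt_iff a₁ a₂ b₁ b₂ c₁ c₂ hB hC).2 hp))]

lemma nondeg_of_sextType_ne_zero {a₁ a₂ b₁ b₂ c₁ c₂ : ℝ × ℝ}
    (h : sextType a₁ a₂ b₁ b₂ c₁ c₂ ≠ 0) : ¬ IsDegenerate a₁ a₂ b₁ b₂ c₁ c₂ := by
  intro hd; exact h (by simp [sextType, hd])

lemma sign_const {g : ℝ → ℝ} (hg : ContinuousOn g (Set.Icc 0 1))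
    (hne : ∀ t ∈ Set.Icc (0:ℝ) 1, g t ≠ 0) : (0 < g 0 ↔ 0 < g 1) := by
  have h0 : g 0 ≠ 0 := hne 0 (by norm_num)
  have h1 : g 1 ≠ 0 := hne 1 (by norm_num)
  constructor
  · intro hp
    by_contra hn
    push_neg at hn
    have : (0:ℝ) ∈ Set.Icc (g 1) (g 0) := ⟨hn, hp.le⟩
    obtain ⟨t, ht, hgt⟩ := intermediate_value_Icc' (by norm_num : (0:ℝ) ≤ 1) hg this
    exact hne t ht hgt
  · intro hp
    by_contra hn
    push_neg at hn
    have : (0:ℝ) ∈ Set.Icc (g 0) (g 1) := ⟨hn, hp.le⟩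
    obtain ⟨t, ht, hgt⟩ := intermediate_value_Icc (by norm_num : (0:ℝ) ≤ 1) hg this
    exact hne t ht hgt

/-- If two simple point sequences `P` and `Q` are joined by a continuous path in
`(ℝ²)ⁿ` all of whose points are simple sequences, then `P` and `Q` have the same
super-order type. -/
theorem super_order_type_constant_along_simple_path {n : ℕ}
    (P Q : Fin n → ℝ × ℝ) (hP : IsSimpleSeq P) (hQ : IsSimpleSeq Q)
    (f : ℝ → Fin n → ℝ × ℝ) (hf : ContinuousOn f (Set.Icc 0 1))
    (hf0 : f 0 = P) (hf1 : f 1 = Q)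
    (hsimple : ∀ t ∈ Set.Icc (0 : ℝ) 1, IsSimpleSeq (f t)) :
    superOrderType P = superOrderType Q := by
  funext T
  obtain ⟨i₁, i₂, j₁, j₂, k₁, k₂⟩ := T
  by_cases hadm : AdmissibleIdx i₁ i₂ j₁ j₂ k₁ k₂
  · simp only [superOrderType, if_pos hadm]
    set g : ℝ → ℝ := fun t =>
      PhiOf (f t i₁) (f t i₂) (f t j₁) (f t j₂) (f t k₁) (f t k₂) with hg
    have hnd : ∀ t ∈ Set.Icc (0:ℝ) 1,
        ¬ IsDegenerate (f t i₁) (f t i₂) (f t j₁) (f t j₂) (f t k₁) (f t k₂) :=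
      fun t ht => nondeg_of_sextType_ne_zero ((hsimple t ht).2 i₁ i₂ j₁ j₂ k₁ k₂ hadm)
    have hne : ∀ t ∈ Set.Icc (0:ℝ) 1, g t ≠ 0 :=
      fun t ht => phi_ne_zero_of_nondeg (hnd t ht)
    have hcoord : ∀ i : Fin n, ContinuousOn (fun t => f t i) (Set.Icc (0:ℝ) 1) :=
      fun i => (continuous_apply i).comp_continuousOn hf
    have hgc : ContinuousOn g (Set.Icc (0:ℝ) 1) := by
      simp only [hg, PhiOf, cross, Prod.fst_sub, Prod.snd_sub]
      fun_prop
    have hsign := sign_const hgc hne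
    have h0 : (0:ℝ) ∈ Set.Icc (0:ℝ) 1 := by norm_num
    have h1 : (1:ℝ) ∈ Set.Icc (0:ℝ) 1 := by norm_num
    have e0 := sextType_eq_of_nondeg (hf0 ▸ hnd 0 h0)
    have e1 := sextType_eq_of_nondeg (hf1 ▸ hnd 1 h1)
    rw [e0, e1]
    have hg0 : g 0 = PhiOf (P i₁) (P i₂) (P j₁) (P j₂) (P k₁) (P k₂) := by rw [hg]; simp [hf0]
    have hg1 : g 1 = PhiOf (Q i₁) (Q i₂) (Q j₁) (Q j₂) (Q k₁) (Q k₂) := by rw [hg]; simp [hf1]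
    rw [hg0, hg1] at hsign
    by_cases hp : 0 < PhiOf (P i₁) (P i₂) (P j₁) (P j₂) (P k₁) (P k₂)
    · rw [if_pos hp, if_pos (hsign.1 hp)]
    · rw [if_neg hp, if_neg (fun h => hp (hsign.2 h))]
  · simp only [superOrderType, if_neg hadm]
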